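/- Let W be uniform on [1..b], independent of M₀, M₁ which are i.i.d. uniform on {0,1}. Let θ : [1..b] → {0,1} and η : [1..b] → {0,1} be functions and Z₀ = M_{θ(W)} ⊕ η(W). Suppose there exists a random variable G ∈ {0,1} with H(G | Z₀, W) = 0 and H(M₀, M₁ | G, M₀⊕M₁) = 0. Then θ is constant, i.e., θ(1) = θ(2) = ⋯ = θ(b). -/

import Mathlib

open MeasureTheory ENNReal

/-- Shannon entropy (in nats) of a finitely-valued random variable. -/
noncomputable def ent {Ω α : Type*} [MeasurableSpace Ω] [Fintype α]
    (μ : Measure Ω) (X : Ω → α) : ℝ :=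
  ∑ a : α, Real.negMulLog ((μ (X ⁻¹' {a})).toReal)

/-- Conditional Shannon entropy H(X | Y) = H(X, Y) - H(Y). -/
noncomputable def condEnt {Ω α β : Type*} [MeasurableSpace Ω] [Fintype α] [Fintype β]
    (μ : Measure Ω) (X : Ω → α) (Y : Ω → β) : ℝ :=
  ent μ (fun ω => (X ω, Y ω)) - ent μ Y

lemma term_ge {p q : ℝ} (hp : 0 ≤ p) (hpq : p ≤ q) :
    Real.negMulLog p ≥ -(p * Real.log q) := by
  rcases eq_or_lt_of_le hp with h | h
  · simp [← h, Real.negMulLog]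
  · have : Real.log p ≤ Real.log q := Real.log_le_log h hpq
    have := mul_le_mul_of_nonneg_left this (le_of_lt h)
    simp only [Real.negMulLog]
    nlinarith

lemma keyA {Ω α β : Type*} [MeasurableSpace Ω] [Fintype α] [Fintype β]
    (μ : Measure Ω) [IsProbabilityMeasure μ]
    (X : Ω → α) (Y : Ω → β) (h : condEnt μ X Y = 0)
    (y : β) (hy : μ (Y ⁻¹' {y}) < 1)
    {x x' : α} (hx : μ ((fun ω => (X ω, Y ω)) ⁻¹' {(x, y)}) ≠ 0)
    (hx' : μ ((fun ω => (X ω, Y ω)) ⁻¹' {(x', y)}) ≠ 0) : x = x' := by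
  classical
  set p : α → β → ℝ := fun a c => (μ ((fun ω => (X ω, Y ω)) ⁻¹' {(a, c)})).toReal with hp
  set q : β → ℝ := fun c => (μ (Y ⁻¹' {c})).toReal with hq
  have hfin : ∀ s : Set Ω, μ s ≠ ⊤ := fun s => measure_ne_top μ s
  have hp0 : ∀ a c, 0 ≤ p a c := fun a c => ENNReal.toReal_nonneg
  have hsubset : ∀ a c, ((fun ω => (X ω, Y ω)) ⁻¹' {(a, c)}) ⊆ Y ⁻¹' {c} := by
    intro a c ω hω
    simp only [Set.mem_preimage, Set.mem_singleton_iff, Prod.mk.injEq] at hω ⊢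
    exact hω.2
  have hpq : ∀ a c, p a c ≤ q c := fun a c =>
    ENNReal.toReal_le_toReal (hfin _) (hfin _) |>.mpr (measure_mono (hsubset a c))
  have hq1 : ∀ c, q c ≤ 1 := fun c => by
    simpa using ENNReal.toReal_le_toReal (hfin _) (by simp) |>.mpr (prob_le_one (μ := μ))
  have hcover : ∀ c, Y ⁻¹' {c} ⊆ ⋃ a : α, ((fun ω => (X ω, Y ω)) ⁻¹' {(a, c)}) := by
    intro c ω hω
    exact Set.mem_iUnion.2 ⟨X ω, by simp_all⟩
  have hsub : ∀ c, q c ≤ ∑ a, p a c := by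
    intro c
    have h1 : μ (Y ⁻¹' {c}) ≤ ∑ a, μ ((fun ω => (X ω, Y ω)) ⁻¹' {(a, c)}) := by
      refine (measure_mono (hcover c)).trans ?_
      simpa using measure_iUnion_fintype_le μ _
    have h2 := ENNReal.toReal_le_toReal (hfin _) (by
      exact ENNReal.sum_ne_top.mpr fun a _ => hfin _) |>.mpr h1
    simpa [ENNReal.toReal_sum (fun a _ => hfin _)] using h2
  -- rearrange condEnt
  have hsplit : ∑ c : β, ((∑ a : α, Real.negMulLog (p a c)) - Real.negMulLog (q c)) = 0 := by
    have e : ent μ (fun ω => (X ω, Y ω)) = ∑ c : β, ∑ a : α, Real.negMulLog (p a c) := by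
      rw [ent, Fintype.sum_prod_type, Finset.sum_comm]
    have : condEnt μ X Y
        = ∑ c : β, ((∑ a : α, Real.negMulLog (p a c)) - Real.negMulLog (q c)) := by
      rw [condEnt, e, ent, Finset.sum_sub_distrib]
    linarith [this ▸ h]
  have Tnn : ∀ c : β, 0 ≤ (∑ a : α, Real.negMulLog (p a c)) - Real.negMulLog (q c) := by
    intro c
    have step1 : ∑ a : α, Real.negMulLog (p a c) ≥ ∑ a : α, -(p a c * Real.log (q c)) :=
      Finset.sum_le_sum fun a _ => term_ge (hp0 a c) (hpq a c)
    have hlogq : Real.log (q c) ≤ 0 := Real.log_nonpos (ENNReal.toReal_nonneg) (hq1 c)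
    have e1 : ∑ a : α, -(p a c * Real.log (q c)) = -((∑ a : α, p a c) * Real.log (q c)) := by
      rw [Finset.sum_neg_distrib, Finset.sum_mul]
    have step2 : -((∑ a : α, p a c) * Real.log (q c)) ≥ -(q c * Real.log (q c)) := by
      nlinarith [mul_nonneg (sub_nonneg.2 (hsub c)) (neg_nonneg.2 hlogq)]
    simp only [Real.negMulLog] at *
    nlinarith [step1, e1 ▸ step2]
  have hTy : (∑ a : α, Real.negMulLog (p a y)) - Real.negMulLog (q y) = 0 :=
    (Finset.sum_eq_zero_iff_of_nonneg (fun c _ => Tnn c)).mp hsplit y (Finset.mem_univ y)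
  -- decompose T y into two nonneg parts
  set L := Real.log (q y) with hL
  have hA : ∀ a : α, 0 ≤ Real.negMulLog (p a y) - -(p a y * L) :=
    fun a => sub_nonneg.2 (term_ge (hp0 a y) (hpq a y))
  have hlogq : L ≤ 0 := Real.log_nonpos ENNReal.toReal_nonneg (hq1 y)
  have hB : 0 ≤ (∑ a : α, -(p a y * L)) - Real.negMulLog (q y) := by
    have e1 : ∑ a : α, -(p a y * L) = -((∑ a : α, p a y) * L) := by
      rw [Finset.sum_neg_distrib, Finset.sum_mul]
    simp only [Real.negMulLog, e1]
    nlinarith [mul_nonneg (sub_nonneg.2 (hsub y)) (neg_nonneg.2 hlogq)]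
  have hAsum : ∑ a : α, (Real.negMulLog (p a y) - -(p a y * L)) = 0 := by
    have e : (∑ a : α, (Real.negMulLog (p a y) - -(p a y * L)))
        + ((∑ a : α, -(p a y * L)) - Real.negMulLog (q y)) = 0 := by
      rw [Finset.sum_sub_distrib]; linarith [hTy]
    have := Finset.sum_nonneg (fun a (_ : a ∈ Finset.univ) => hA a)
    linarith
  have hterm : ∀ a : α, Real.negMulLog (p a y) = -(p a y * L) := by
    intro a
    have := (Finset.sum_eq_zero_iff_of_nonneg (fun a _ => hA a)).mp hAsum a (Finset.mem_univ a)
    linarith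
  -- positivity of p x y, p x' y
  have hpx : 0 < p x y := ENNReal.toReal_pos hx (hfin _)
  have hpx' : 0 < p x' y := ENNReal.toReal_pos hx' (hfin _)
  have hqpos : 0 < q y := lt_of_lt_of_le hpx (hpq x y)
  have hqlt1 : q y < 1 := by
    have := (ENNReal.toReal_lt_toReal (hfin _) (by simp : (1:ℝ≥0∞) ≠ ⊤)).mpr hy
    simpa using this
  have hLneg : L < 0 := Real.log_neg hqpos hqlt1
  have hpeq : ∀ a : α, 0 < p a y → p a y = q y := by
    intro a ha
    have h1 := hterm a
    simp only [Real.negMulLog] at h1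
    have h2 : p a y * (Real.log (p a y) - L) = 0 := by nlinarith
    have h3 : Real.log (p a y) = L := by
      rcases mul_eq_zero.mp h2 with h | h
      · linarith
      · linarith
    calc p a y = Real.exp (Real.log (p a y)) := (Real.exp_log ha).symm
      _ = Real.exp (Real.log (q y)) := by rw [h3]
      _ = q y := Real.exp_log hqpos
  -- sum equality
  have hBsum : (∑ a : α, -(p a y * L)) - Real.negMulLog (q y) = 0 := by
    have : ∑ a : α, (Real.negMulLog (p a y) - -(p a y * L)) +
        ((∑ a : α, -(p a y * L)) - Real.negMulLog (q y)) = 0 := by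
      rw [Finset.sum_sub_distrib]; linarith [hTy]
    linarith [hAsum]
  have hseq : (∑ a : α, p a y) = q y := by
    have e1 : ∑ a : α, -(p a y * L) = -((∑ a : α, p a y) * L) := by
      rw [Finset.sum_neg_distrib, Finset.sum_mul]
    rw [e1] at hBsum
    simp only [Real.negMulLog] at hBsum
    have : ((∑ a : α, p a y) - q y) * L = 0 := by ring_nf; ring_nf at hBsum; linarith
    rcases mul_eq_zero.mp this with h | h
    · linarith
    · exact absurd h (ne_of_lt hLneg)
  by_contra hne
  have hpair : p x y + p x' y ≤ ∑ a : α, p a y := by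
    have := Finset.sum_le_sum_of_subset_of_nonneg
      (Finset.subset_univ ({x, x'} : Finset α)) (fun a _ _ => hp0 a y)
    rwa [Finset.sum_pair hne] at this
  have := hpeq x hpx
  have := hpeq x' hpx'
  linarith [hseq, hpair, hqpos]

lemma stmt8aux {Ω : Type*} [MeasurableSpace Ω] (μ : Measure Ω) [IsProbabilityMeasure μ]
    (b : ℕ) (hb : 0 < b) (W : Ω → Fin b) (M₀ M₁ : Ω → ZMod 2)
    (hjoint : ∀ (w : Fin b) (a₀ a₁ : ZMod 2),
      μ {ω | W ω = w ∧ M₀ ω = a₀ ∧ M₁ ω = a₁} = ((4 * b : ℕ) : ℝ≥0∞)⁻¹)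
    (θ η : Fin b → ZMod 2)
    (Z₀ : Ω → ZMod 2)
    (hZ₀ : ∀ ω, Z₀ ω = (if θ (W ω) = 0 then M₀ ω else M₁ ω) + η (W ω))
    (G : Ω → ZMod 2)
    (hG1 : condEnt μ G (fun ω => (Z₀ ω, W ω)) = 0)
    (hG2 : condEnt μ (fun ω => (M₀ ω, M₁ ω)) (fun ω => (G ω, M₀ ω + M₁ ω)) = 0)
    (w w' : Fin b) (hw : θ w = 0) (hw' : θ w' = 1) : False := by
  classical
  set N : ℝ≥0∞ := ((4 * b : ℕ) : ℝ≥0∞)⁻¹ with hNdef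
  have hN0 : N ≠ 0 := ENNReal.inv_ne_zero.mpr (ENNReal.natCast_ne_top _)
  set E : Fin b → ZMod 2 → ZMod 2 → Set Ω :=
    fun w₀ a₀ a₁ => {ω | W ω = w₀ ∧ M₀ ω = a₀ ∧ M₁ ω = a₁} with hEdef
  have zcases : ∀ a : ZMod 2, a = 0 ∨ a = 1 := by decide
  have zadd : ∀ x y : ZMod 2, x + y + y = x := by decide
  -- existence of G-value on each atom
  have hE : ∀ w₀ a₀ a₁, ∃ γ : ZMod 2, μ (E w₀ a₀ a₁ ∩ G ⁻¹' {γ}) ≠ 0 := by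
    intro w₀ a₀ a₁
    by_contra hc
    push_neg at hc
    have hcover : E w₀ a₀ a₁ ⊆ (E w₀ a₀ a₁ ∩ G ⁻¹' {0}) ∪ (E w₀ a₀ a₁ ∩ G ⁻¹' {1}) := by
      intro ω hω
      rcases zcases (G ω) with h | h
      · exact Or.inl ⟨hω, h⟩
      · exact Or.inr ⟨hω, h⟩
    have : μ (E w₀ a₀ a₁) = 0 := by
      refine le_antisymm ?_ zero_le
      calc μ (E w₀ a₀ a₁) ≤ μ (E w₀ a₀ a₁ ∩ G ⁻¹' {0}) + μ (E w₀ a₀ a₁ ∩ G ⁻¹' {1}) :=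
        (measure_mono hcover).trans (measure_union_le _ _)
      _ = 0 := by rw [hc 0, hc 1, add_zero]
    rw [hjoint w₀ a₀ a₁] at this
    exact hN0 this
  -- bounds < 1
  have hNle : N ≤ (4:ℝ≥0∞)⁻¹ := by
    rw [hNdef, ENNReal.inv_le_inv]
    exact_mod_cast Nat.le_mul_of_pos_right 4 hb
  have htwo : (4:ℝ≥0∞)⁻¹ + 4⁻¹ < 1 := by
    rw [show (4:ℝ≥0∞)⁻¹ + 4⁻¹ = 2⁻¹ by
      rw [← two_mul, show (4:ℝ≥0∞) = 2*2 by norm_num,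
        ENNReal.mul_inv (Or.inl (by norm_num)) (Or.inl (by norm_num)),
        ← mul_assoc, ENNReal.mul_inv_cancel (by norm_num) (by norm_num), one_mul]]
    exact ENNReal.inv_lt_one.mpr one_lt_two
  have hy1 : ∀ (w₀ : Fin b) (z : ZMod 2), (θ w₀ = 0 ∨ θ w₀ = 1) →
      μ ((fun ω => (Z₀ ω, W ω)) ⁻¹' {(z, w₀)}) < 1 := by
    intro w₀ z hθ
    have hss : (fun ω => (Z₀ ω, W ω)) ⁻¹' {(z, w₀)} ⊆
        (if θ w₀ = 0 then E w₀ (z + η w₀) 0 ∪ E w₀ (z + η w₀) 1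
         else E w₀ 0 (z + η w₀) ∪ E w₀ 1 (z + η w₀)) := by
      intro ω hω
      simp only [Set.mem_preimage, Set.mem_singleton_iff, Prod.mk.injEq] at hω
      obtain ⟨hz, hWω⟩ := hω
      rcases hθ with h0 | h1
      · have hM : M₀ ω = z + η w₀ := by
          rw [hZ₀ ω, hWω, h0, if_pos rfl] at hz
          rw [← hz]; rw [zadd]
        rw [if_pos h0]
        rcases zcases (M₁ ω) with h | h
        · exact Or.inl ⟨hWω, hM, h⟩
        · exact Or.inr ⟨hWω, hM, h⟩
      · have hM : M₁ ω = z + η w₀ := by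
          rw [hZ₀ ω, hWω, h1, if_neg (by simp [h1])] at hz
          rw [← hz]; rw [zadd]
        rw [if_neg (by simp [h1])]
        rcases zcases (M₀ ω) with h | h
        · exact Or.inl ⟨hWω, h, hM⟩
        · exact Or.inr ⟨hWω, h, hM⟩
    refine lt_of_le_of_lt ((measure_mono hss).trans ?_) htwo
    split_ifs
    · exact (measure_union_le _ _).trans (by rw [hjoint, hjoint]; exact add_le_add hNle hNle)
    · exact (measure_union_le _ _).trans (by rw [hjoint, hjoint]; exact add_le_add hNle hNle)
  have hy2 : ∀ (γ s : ZMod 2),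
      μ ((fun ω => (G ω, M₀ ω + M₁ ω)) ⁻¹' {(γ, s)}) < 1 := by
    intro γ s
    have hss : (fun ω => (G ω, M₀ ω + M₁ ω)) ⁻¹' {(γ, s)} ⊆
        ⋃ i : Fin b × ZMod 2, E i.1 i.2 (s + i.2) := by
      intro ω hω
      simp only [Set.mem_preimage, Set.mem_singleton_iff, Prod.mk.injEq] at hω
      refine Set.mem_iUnion.2 ⟨(W ω, M₀ ω), rfl, rfl, ?_⟩
      rw [← hω.2]; rw [add_comm (M₀ ω) (M₁ ω), zadd]
    have hle : μ ((fun ω => (G ω, M₀ ω + M₁ ω)) ⁻¹' {(γ, s)}) ≤ (2*b : ℕ) • N := by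
      refine (measure_mono hss).trans ?_
      refine (measure_iUnion_fintype_le μ _).trans ?_
      have : ∀ i : Fin b × ZMod 2, μ (E i.1 i.2 (s + i.2)) = N := fun i => hjoint _ _ _
      rw [Finset.sum_congr rfl (fun i _ => this i), Finset.sum_const]
      simp [Fintype.card_prod, mul_comm]
    refine lt_of_le_of_lt hle ?_
    rw [nsmul_eq_mul]
    have h4 : ((4*b:ℕ):ℝ≥0∞) = 2 * ((2*b:ℕ):ℝ≥0∞) := by push_cast; ring
    rw [hNdef, h4, ENNReal.mul_inv (Or.inl (by norm_num)) (Or.inl (by norm_num)), ← mul_assoc,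
      mul_comm ((2*b:ℕ):ℝ≥0∞), mul_assoc,
      ENNReal.mul_inv_cancel (by exact_mod_cast (Nat.mul_pos two_pos hb).ne')
        (ENNReal.natCast_ne_top _), mul_one]
    exact ENNReal.inv_lt_one.mpr one_lt_two
  -- inclusions
  have hinc1 : ∀ (w₀ : Fin b) (a₀ a₁ γ : ZMod 2), θ w₀ = 0 →
      (E w₀ a₀ a₁ ∩ G ⁻¹' {γ}) ⊆
        (fun ω => (G ω, (Z₀ ω, W ω))) ⁻¹' {(γ, (a₀ + η w₀, w₀))} := by
    intro w₀ a₀ a₁ γ h0 ω ⟨⟨h1, h2, h3⟩, h4⟩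
    simp only [Set.mem_preimage, Set.mem_singleton_iff, Prod.mk.injEq]
    refine ⟨h4, ?_, h1⟩
    rw [hZ₀ ω, h1, h0, if_pos rfl, h2]
  have hinc1' : ∀ (w₀ : Fin b) (a₀ a₁ γ : ZMod 2), θ w₀ = 1 →
      (E w₀ a₀ a₁ ∩ G ⁻¹' {γ}) ⊆
        (fun ω => (G ω, (Z₀ ω, W ω))) ⁻¹' {(γ, (a₁ + η w₀, w₀))} := by
    intro w₀ a₀ a₁ γ h0 ω ⟨⟨h1, h2, h3⟩, h4⟩
    simp only [Set.mem_preimage, Set.mem_singleton_iff, Prod.mk.injEq]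
    refine ⟨h4, ?_, h1⟩
    rw [hZ₀ ω, h1, h0, if_neg (by simp), h3]
  have hinc2 : ∀ (w₀ : Fin b) (a₀ a₁ γ : ZMod 2),
      (E w₀ a₀ a₁ ∩ G ⁻¹' {γ}) ⊆
        (fun ω => ((M₀ ω, M₁ ω), (G ω, M₀ ω + M₁ ω))) ⁻¹' {((a₀, a₁), (γ, a₀ + a₁))} := by
    intro w₀ a₀ a₁ γ ω ⟨⟨h1, h2, h3⟩, h4⟩
    simp only [Set.mem_preimage, Set.mem_singleton_iff, Prod.mk.injEq]
    exact ⟨⟨h2, h3⟩, h4, by rw [h2, h3]⟩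
  -- uniqueness instances
  have U1 : ∀ (w₀ : Fin b) (z γ γ' : ZMod 2), (θ w₀ = 0 ∨ θ w₀ = 1) →
      μ ((fun ω => (G ω, (Z₀ ω, W ω))) ⁻¹' {(γ, (z, w₀))}) ≠ 0 →
      μ ((fun ω => (G ω, (Z₀ ω, W ω))) ⁻¹' {(γ', (z, w₀))}) ≠ 0 → γ = γ' := by
    intro w₀ z γ γ' hθ h1 h2
    exact keyA μ G (fun ω => (Z₀ ω, W ω)) hG1 (z, w₀) (hy1 w₀ z hθ) h1 h2
  have U2 : ∀ (γ s : ZMod 2) (a₀ a₁ a₀' a₁' : ZMod 2),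
      μ ((fun ω => ((M₀ ω, M₁ ω), (G ω, M₀ ω + M₁ ω))) ⁻¹' {((a₀, a₁), (γ, s))}) ≠ 0 →
      μ ((fun ω => ((M₀ ω, M₁ ω), (G ω, M₀ ω + M₁ ω))) ⁻¹' {((a₀', a₁'), (γ, s))}) ≠ 0 →
      (a₀, a₁) = (a₀', a₁') := by
    intro γ s a₀ a₁ a₀' a₁' h1 h2
    exact keyA μ (fun ω => (M₀ ω, M₁ ω)) (fun ω => (G ω, M₀ ω + M₁ ω)) hG2 (γ, s)
      (hy2 γ s) h1 h2
  -- get gamma values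
  obtain ⟨γ01, hγ01⟩ := hE w 0 1
  obtain ⟨γ10, hγ10⟩ := hE w 1 0
  obtain ⟨γ00, hγ00⟩ := hE w 0 0
  obtain ⟨γ11, hγ11⟩ := hE w 1 1
  obtain ⟨δ00, hδ00⟩ := hE w' 0 0
  obtain ⟨δ10, hδ10⟩ := hE w' 1 0
  have ne_of_sub : ∀ {s t : Set Ω}, s ⊆ t → μ s ≠ 0 → μ t ≠ 0 :=
    fun hsub hs h => hs (measure_mono_null hsub h)
  -- G-value constraints via U1
  have e0001 : γ00 = γ01 :=
    U1 w (0 + η w) γ00 γ01 (Or.inl hw)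
      (ne_of_sub (hinc1 w 0 0 γ00 hw) hγ00) (ne_of_sub (hinc1 w 0 1 γ01 hw) hγ01)
  have e1011 : γ10 = γ11 :=
    U1 w (1 + η w) γ10 γ11 (Or.inl hw)
      (ne_of_sub (hinc1 w 1 0 γ10 hw) hγ10) (ne_of_sub (hinc1 w 1 1 γ11 hw) hγ11)
  have ed : δ00 = δ10 :=
    U1 w' (0 + η w') δ00 δ10 (Or.inr hw')
      (ne_of_sub (hinc1' w' 0 0 δ00 hw') hδ00) (ne_of_sub (hinc1' w' 1 0 δ10 hw') hδ10)
  -- pair nonzero facts via hinc2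
  have n01 := ne_of_sub (hinc2 w 0 1 γ01) hγ01
  have n10 := ne_of_sub (hinc2 w 1 0 γ10) hγ10
  have n00 := ne_of_sub (hinc2 w 0 0 γ00) hγ00
  have n11 := ne_of_sub (hinc2 w 1 1 γ11) hγ11
  have m00 := ne_of_sub (hinc2 w' 0 0 δ00) hδ00
  have m10 := ne_of_sub (hinc2 w' 1 0 δ10) hδ10
  have z11 : (1:ZMod 2) + 1 = 0 := by decide
  rw [zero_add] at n01
  rw [add_zero] at n10 m00 m10
  rw [z11] at n11
  rw [← e1011] at n11
  rw [← ed] at m10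
  have tri : ∀ u v t : ZMod 2, u ≠ t → v ≠ t → u = v := by decide
  have hne1 : γ01 ≠ γ10 := fun hEq => by
    have := U2 γ10 1 0 1 1 0 (hEq ▸ n01) n10
    exact absurd this (by decide)
  have hne2 : δ00 ≠ γ10 := fun hEq => by
    have := U2 γ10 0 0 0 1 1 (hEq ▸ m00) n11
    exact absurd this (by decide)
  have hδγ : δ00 = γ01 := tri _ _ _ hne2 hne1
  have := U2 γ01 1 0 1 1 0 n01 (hδγ ▸ m10)
  exact absurd this (by decide)

/-- the virtual equality checker lemma. -/
theorem stmt8 {Ω : Type*} [MeasurableSpace Ω] (μ : Measure Ω) [IsProbabilityMeasure μ]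
    (b : ℕ) (hb : 0 < b) (W : Ω → Fin b) (M₀ M₁ : Ω → ZMod 2)
    (hjoint : ∀ (w : Fin b) (a₀ a₁ : ZMod 2),
      μ {ω | W ω = w ∧ M₀ ω = a₀ ∧ M₁ ω = a₁} = ((4 * b : ℕ) : ℝ≥0∞)⁻¹)
    (θ η : Fin b → ZMod 2)
    (Z₀ : Ω → ZMod 2)
    (hZ₀ : ∀ ω, Z₀ ω = (if θ (W ω) = 0 then M₀ ω else M₁ ω) + η (W ω))
    (G : Ω → ZMod 2)
    (hG1 : condEnt μ G (fun ω => (Z₀ ω, W ω)) = 0)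
    (hG2 : condEnt μ (fun ω => (M₀ ω, M₁ ω)) (fun ω => (G ω, M₀ ω + M₁ ω)) = 0) :
    ∀ w w' : Fin b, θ w = θ w' := by
  intro w w'
  by_contra hne
  rcases (by decide : ∀ a c : ZMod 2, a ≠ c → (a = 0 ∧ c = 1) ∨ (a = 1 ∧ c = 0)) _ _ hne with
    ⟨h1, h2⟩ | ⟨h1, h2⟩
  · exact stmt8aux μ b hb W M₀ M₁ hjoint θ η Z₀ hZ₀ G hG1 hG2 w w' h1 h2
  · exact stmt8aux μ b hb W M₀ M₁ hjoint θ η Z₀ hZ₀ G hG1 hG2 w' w h2 h1
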